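/- Let p be a prime with p ≠ 2, p ≠ 5, and (5/p) = -1, and let q = p^n. Then the number of triples (a,b,c) in F_q^3 with c^4 - a*b*c^3 + (a^2+b^2-3)*c^2 - a*b*c + 1 = 0 equals q^2 + 4q + 3 if n is even, and q^2 + 3 if n is odd. -/

import Mathlib

open Finset

section Aux

variable {F : Type} [Field F] [Fintype F] [DecidableEq F]

set_option linter.unusedSectionVars false

lemma aux_card_graph (g : F → F) :
    (univ.filter fun xy : F × F => xy.1 = g xy.2).card = Fintype.card F := by
  rw [← Finset.card_univ (α := F)]
  apply Finset.card_nbij' (fun xy => xy.2) (fun y => (g y, y))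
  · intro a _; exact mem_univ _
  · intro a _; simp
  · intro a ha
    simp only [Finset.mem_coe, mem_filter, mem_univ, true_and] at ha
    exact Prod.ext ha.symm rfl
  · intro a _; rfl

lemma aux_card_mul_ne (c : F) (hc : c ≠ 0) :
    (univ.filter fun uv : F × F => uv.1 * uv.2 = c).card = Fintype.card F - 1 := by
  have h1 : (univ.filter fun u : F => u ≠ 0).card = Fintype.card F - 1 := by
    simp [Finset.filter_ne', Finset.card_erase_of_mem]
  rw [← h1]
  apply Finset.card_nbij' (fun uv => uv.1) (fun u => (u, u⁻¹ * c))
  · intro a ha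
    simp only [Finset.mem_coe, mem_filter, mem_univ, true_and] at ha ⊢
    intro h
    rw [h] at ha
    simp at ha
    exact hc ha.symm
  · intro a ha
    simp only [Finset.mem_coe, mem_filter, mem_univ, true_and] at ha ⊢
    field_simp
  · intro a ha
    simp only [Finset.mem_coe, mem_filter, mem_univ, true_and] at ha
    have h1 : a.1 ≠ 0 := by rintro h; rw [h] at ha; simp at ha; exact hc ha.symm
    have : a.2 = a.1⁻¹ * c := by field_simp; rw [mul_comm]; exact ha
    exact Prod.ext rfl this.symm
  · intro a _; rfl

lemma aux_card_mul_zero :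
    (univ.filter fun uv : F × F => uv.1 * uv.2 = 0).card = 2 * Fintype.card F - 1 := by
  have : (univ.filter fun uv : F × F => uv.1 * uv.2 = 0)
      = ({(0:F)} ×ˢ (univ : Finset F)) ∪ ((univ : Finset F) ×ˢ {(0:F)}) := by
    ext ⟨u, v⟩
    simp [mul_eq_zero, eq_comm]
  rw [this, Finset.card_union]
  have h1 : (({(0:F)} ×ˢ (univ : Finset F)) ∩ ((univ : Finset F) ×ˢ {(0:F)}))
      = {((0:F), (0:F))} := by
    ext ⟨u, v⟩; simp [Prod.ext_iff, and_comm, eq_comm]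
  rw [h1]
  simp [Finset.card_product, two_mul]

lemma slice_generic (z : F) (h0 : z ≠ 0) (h1 : z ≠ 1) (hm1 : z ≠ -1) :
    (univ.filter fun xy : F × F =>
      z^4 - xy.1*xy.2*z^3 + (xy.1^2+xy.2^2-3)*z^2 - xy.1*xy.2*z + 1 = 0).card
    = (univ.filter fun uv : F × F =>
        uv.1 * uv.2 = -z⁻¹ * ((z^2-z-1)*(z^2+z-1))).card := by
  have hz1 : z^2 - 1 ≠ 0 := by
    intro h
    rcases mul_eq_zero.mp (show (z-1)*(z+1) = 0 by linear_combination h) with h' | h'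
    · exact h1 (by linear_combination h')
    · exact hm1 (by linear_combination h')
  have key : ∀ x y : F, (z^4 - x*y*z^3 + (x^2+y^2-3)*z^2 - x*y*z + 1 = 0)
      ↔ (x - z*y) * (x*z - y) = -z⁻¹ * ((z^2-z-1)*(z^2+z-1)) := by
    intro x y
    constructor
    · intro h
      field_simp
      linear_combination h
    · intro h
      have h' : z * ((x - z*y) * (x*z - y)) = -((z^2-z-1)*(z^2+z-1)) := by
        field_simp at h
        linear_combination h
      linear_combination h'
  apply Finset.card_nbij' (fun xy => (xy.1 - z*xy.2, xy.1*z - xy.2))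
    (fun uv => ((uv.2*z - uv.1)/(z^2-1), (uv.2 - uv.1*z)/(z^2-1)))
  · intro a ha
    simp only [Finset.mem_coe, mem_filter, mem_univ, true_and] at ha ⊢
    exact (key a.1 a.2).mp ha
  · intro a ha
    simp only [Finset.mem_coe, mem_filter, mem_univ, true_and] at ha ⊢
    apply (key _ _).mpr
    have e1 : (a.2*z - a.1)/(z^2-1) - z*((a.2 - a.1*z)/(z^2-1)) = a.1 := by
      field_simp; ring
    have e2 : ((a.2*z - a.1)/(z^2-1))*z - (a.2 - a.1*z)/(z^2-1) = a.2 := by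
      field_simp; ring
    rw [e1, e2]; exact ha
  · intro a _
    have e1 : ((a.1*z - a.2)*z - (a.1 - z*a.2))/(z^2-1) = a.1 := by
      field_simp; ring
    have e2 : ((a.1*z - a.2) - (a.1 - z*a.2)*z)/(z^2-1) = a.2 := by
      field_simp; ring
    exact Prod.ext e1 e2
  · intro a _
    have e1 : (a.2*z - a.1)/(z^2-1) - z*((a.2 - a.1*z)/(z^2-1)) = a.1 := by
      field_simp; ring
    have e2 : ((a.2*z - a.1)/(z^2-1))*z - (a.2 - a.1*z)/(z^2-1) = a.2 := by
      field_simp; ring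
    exact Prod.ext e1 e2

lemma slice_pm_one (ht : (2:F) ≠ 0) (e : F) (he : e = 1 ∨ e = -1) :
    (univ.filter fun xy : F × F =>
      e^4 - xy.1*xy.2*e^3 + (xy.1^2+xy.2^2-3)*e^2 - xy.1*xy.2*e + 1 = 0).card
    = 2 * Fintype.card F := by
  have key : ∀ xy : F × F,
      (e^4 - xy.1*xy.2*e^3 + (xy.1^2+xy.2^2-3)*e^2 - xy.1*xy.2*e + 1 = 0)
      ↔ (xy.1 = e * xy.2 + 1 ∨ xy.1 = e * xy.2 - 1) := by
    rintro ⟨x, y⟩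
    have hf : e^4 - x*y*e^3 + (x^2+y^2-3)*e^2 - x*y*e + 1
        = (x - e*y - 1) * (x - e*y + 1) := by
      rcases he with h | h <;> rw [h] <;> ring
    rw [hf, mul_eq_zero]
    constructor
    · rintro (h | h)
      · left; linear_combination h
      · right; linear_combination h
    · rintro (h | h)
      · left; linear_combination h
      · right; linear_combination h
  rw [Finset.filter_congr (fun x _ => key x)]
  rw [Finset.filter_or]
  rw [Finset.card_union_of_disjoint]
  · rw [aux_card_graph (fun y => e * y + 1), aux_card_graph (fun y => e * y - 1)]
    ring
  · rw [Finset.disjoint_filter]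
    rintro ⟨x, y⟩ _ h1 h2
    apply ht
    linear_combination h2 - h1

lemma roots_shift (a b : F) (ht : (2:F) ≠ 0) :
    (univ.filter fun z : F => z^2 + a*z + b = 0).card
    = (univ.filter fun s : F => s^2 = a^2 - 4*b).card := by
  apply Finset.card_nbij' (fun z => 2*z + a) (fun s => (s - a)/2)
  · intro z hz
    simp only [Finset.mem_coe, mem_filter, mem_univ, true_and] at hz ⊢
    linear_combination 4*hz
  · intro s hs
    simp only [Finset.mem_coe, mem_filter, mem_univ, true_and] at hs ⊢
    field_simp
    linear_combination hs
  · intro z _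
    field_simp; ring
  · intro s _
    field_simp; ring

lemma rootsA (ht : (2:F) ≠ 0) :
    (univ.filter fun z : F => z^2 - z - 1 = 0).card
    = (univ.filter fun s : F => s^2 = (5:F)).card := by
  apply Finset.card_nbij' (fun z => 2*z - 1) (fun s => (s + 1)/2)
  · intro z hz
    simp only [Finset.mem_coe, mem_filter, mem_univ, true_and] at hz ⊢
    linear_combination 4*hz
  · intro s hs
    simp only [Finset.mem_coe, mem_filter, mem_univ, true_and] at hs ⊢
    field_simp
    linear_combination hs
  · intro z _
    field_simp; ring
  · intro s _
    field_simp; ring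

lemma rootsB (ht : (2:F) ≠ 0) :
    (univ.filter fun z : F => z^2 + z - 1 = 0).card
    = (univ.filter fun s : F => s^2 = (5:F)).card := by
  apply Finset.card_nbij' (fun z => 2*z + 1) (fun s => (s - 1)/2)
  · intro z hz
    simp only [Finset.mem_coe, mem_filter, mem_univ, true_and] at hz ⊢
    linear_combination 4*hz
  · intro s hs
    simp only [Finset.mem_coe, mem_filter, mem_univ, true_and] at hs ⊢
    field_simp
    linear_combination hs
  · intro z _
    field_simp; ring
  · intro s _
    field_simp; ring

end Aux

lemma geom_aux (m : ℕ) : ∀ k : ℕ, m * (∑ i ∈ Finset.range k, (m+1)^i) + 1 = (m+1)^k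
  | 0 => by simp
  | k+1 => by
      rw [Finset.sum_range_succ, Nat.mul_add, pow_succ]
      calc m * (∑ i ∈ Finset.range k, (m+1)^i) + m * (m+1)^k + 1
          = (m * (∑ i ∈ Finset.range k, (m+1)^i) + 1) + m * (m+1)^k := by ring
        _ = (m+1)^k + m * (m+1)^k := by rw [geom_aux m k]
        _ = (m+1)^k * (m+1) := by ring

lemma parity_aux (p : ℕ) (hp : Odd p) : ∀ k : ℕ, (∑ i ∈ Finset.range k, p^i) % 2 = k % 2
  | 0 => by simp
  | k+1 => by
      rw [Finset.sum_range_succ]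
      have h1 : p^k % 2 = 1 := Nat.odd_iff.mp (hp.pow)
      have h2 := parity_aux p hp k
      omega

lemma charP_of_card (p n : ℕ) [hp : Fact p.Prime] (hn : 0 < n)
    (F : Type) [Field F] [Fintype F] (hF : Fintype.card F = p ^ n) : CharP F p := by
  have hcp : CharP F (ringChar F) := ringChar.charP F
  obtain ⟨m, hm⟩ := FiniteField.card F (ringChar F)
  have hdvd : ringChar F ∣ p ^ n := by
    rw [← hF, hm.2]
    exact dvd_pow_self _ m.pos.ne'
  have := Nat.Prime.dvd_of_dvd_pow hm.1 hdvd
  have heq : ringChar F = p := (Nat.prime_dvd_prime_iff_eq hm.1 hp.out).mp this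
  rwa [heq] at hcp

lemma count_sqrt5 (p n : ℕ) [hp : Fact p.Prime] (h2 : p ≠ 2) (h5 : p ≠ 5) (hn : 0 < n)
    (hleg : legendreSym p 5 = -1)
    (F : Type) [Field F] [Fintype F] [DecidableEq F] (hF : Fintype.card F = p ^ n) :
    (univ.filter fun s : F => s^2 = (5:F)).card = if Even n then 2 else 0 := by
  have hchar : CharP F p := charP_of_card p n hn F hF
  have hpodd : Odd p := hp.out.odd_of_ne_two h2
  have h2F : (2:F) ≠ 0 := by
    intro h
    have hd : (p:ℕ) ∣ 2 := (CharP.cast_eq_zero_iff F p 2).mp (by exact_mod_cast h)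
    exact h2 ((Nat.prime_dvd_prime_iff_eq hp.out (by norm_num)).mp hd)
  have h5F : (5:F) ≠ 0 := by
    intro h
    have hd : (p:ℕ) ∣ 5 := (CharP.cast_eq_zero_iff F p 5).mp (by exact_mod_cast h)
    exact h5 ((Nat.prime_dvd_prime_iff_eq hp.out (by norm_num)).mp hd)
  have hringchar : ringChar F = p := ringChar.eq F p
  have hm1 : (-1 : F) ≠ 1 := by
    intro h
    apply h2F
    linear_combination -h
  have heuler : (5:F) ^ (p / 2) = -1 := by
    have h1 : ((legendreSym p 5 : ℤ) : ZMod p) = (5 : ZMod p) ^ (p / 2) := by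
      have := legendreSym.eq_pow p 5
      simpa using this
    rw [hleg] at h1
    have h1' : (5 : ZMod p) ^ (p / 2) = -1 := by
      rw [← h1]; push_cast; ring
    have h3 := congrArg (ZMod.castHom (dvd_refl p) F) h1'
    rw [map_pow, map_neg, map_one, map_ofNat] at h3
    exact h3
  set S := ∑ i ∈ Finset.range n, p ^ i with hS
  obtain ⟨k, hk⟩ := id hpodd
  have hpk : p / 2 = k := by omega
  have hgeom : 2 * k * S + 1 = p ^ n := by
    have hg := geom_aux (p - 1) n
    rw [show p - 1 + 1 = p from by omega] at hg
    rw [show p - 1 = 2 * k from by omega] at hg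
    exact hg
  have hdiv : Fintype.card F / 2 = k * S := by
    have h1 : 2 * k * S = 2 * (k * S) := by ring
    rw [hF]
    omega
  have hSpar : S % 2 = n % 2 := parity_aux p hpodd n
  have h5pow : (5:F) ^ (Fintype.card F / 2) = (-1) ^ n := by
    rw [hdiv, pow_mul, ← hpk, heuler]
    rcases Nat.even_or_odd n with he | ho
    · have heS : Even S := by rw [Nat.even_iff] at he ⊢; omega
      rw [he.neg_one_pow, heS.neg_one_pow]
    · have hoS : Odd S := by rw [Nat.odd_iff] at ho ⊢; omega
      rw [ho.neg_one_pow, hoS.neg_one_pow]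
  by_cases hE : Even n
  · rw [if_pos hE]
    have hsq : IsSquare (5:F) := by
      rw [FiniteField.isSquare_iff (by rw [hringchar]; exact h2) h5F, h5pow, hE.neg_one_pow]
    obtain ⟨s, hs⟩ := hsq
    have hs0 : s ≠ 0 := by rintro rfl; simp at hs; exact h5F hs
    have hsne : s ≠ -s := by
      intro h
      apply hs0
      have : (2:F) * s = 0 := by linear_combination h
      rcases mul_eq_zero.mp this with h' | h'
      · exact absurd h' h2F
      · exact h'
    have : (univ.filter fun t : F => t^2 = (5:F)) = {s, -s} := by
      ext t
      simp only [mem_filter, mem_univ, true_and, mem_insert, mem_singleton]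
      constructor
      · intro h
        have : (t - s) * (t + s) = 0 := by linear_combination h + hs
        rcases mul_eq_zero.mp this with h' | h'
        · left; linear_combination h'
        · right; linear_combination h'
      · rintro (rfl | rfl)
        · linear_combination -hs
        · linear_combination -hs
    rw [this, Finset.card_insert_of_notMem (by simpa using hsne), Finset.card_singleton]
  · rw [if_neg hE]
    rw [Finset.card_eq_zero, Finset.filter_eq_empty_iff]
    intro t _
    intro h
    have hsq : IsSquare (5:F) := ⟨t, by linear_combination -h⟩
    rw [FiniteField.isSquare_iff (by rw [hringchar]; exact h2) h5F, h5pow] at hsq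
    rw [(Nat.not_even_iff_odd.mp hE).neg_one_pow] at hsq
    exact hm1 hsq

theorem stmt_9 (p n : ℕ) [Fact p.Prime] (h2 : p ≠ 2) (h5 : p ≠ 5) (hn : 0 < n)
    (hleg : legendreSym p 5 = -1)
    (F : Type) [Field F] [Fintype F] (hF : Fintype.card F = p ^ n) :
    Nat.card {v : F × F × F //
      v.2.2 ^ 4 - v.1 * v.2.1 * v.2.2 ^ 3 + (v.1 ^ 2 + v.2.1 ^ 2 - 3) * v.2.2 ^ 2
        - v.1 * v.2.1 * v.2.2 + 1 = 0} =
      if Even n then (p ^ n) ^ 2 + 4 * p ^ n + 3 else (p ^ n) ^ 2 + 3 := by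
  classical
  have hp : Fact p.Prime := ‹_›
  have hchar : CharP F p := charP_of_card p n hn F hF
  have h2F : (2:F) ≠ 0 := by
    intro h
    have hd : (p:ℕ) ∣ 2 := (CharP.cast_eq_zero_iff F p 2).mp (by exact_mod_cast h)
    exact h2 ((Nat.prime_dvd_prime_iff_eq hp.out (by norm_num)).mp hd)
  set q : ℕ := Fintype.card F with hq
  have hq1 : 1 ≤ q := Fintype.card_pos
  set nval : F → ℕ := fun z => if z = 0 then 0 else if z = 1 then 2*q else if z = -1 then 2*q
      else if (z^2-z-1)*(z^2+z-1) = 0 then 2*q-1 else q-1 with hnval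
  set r : ℕ := (univ.filter fun s : F => s^2 = (5:F)).card with hr
  -- Step 0: Nat.card to Finset.card
  have step0 : Nat.card {v : F × F × F //
      v.2.2 ^ 4 - v.1 * v.2.1 * v.2.2 ^ 3 + (v.1 ^ 2 + v.2.1 ^ 2 - 3) * v.2.2 ^ 2
        - v.1 * v.2.1 * v.2.2 + 1 = 0}
      = (univ.filter fun v : F × F × F =>
          v.2.2 ^ 4 - v.1 * v.2.1 * v.2.2 ^ 3 + (v.1 ^ 2 + v.2.1 ^ 2 - 3) * v.2.2 ^ 2
            - v.1 * v.2.1 * v.2.2 + 1 = 0).card := by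
    rw [Nat.card_eq_fintype_card, Fintype.card_subtype]
  -- Step 1: fiberwise decomposition
  have step1 : (univ.filter fun v : F × F × F =>
      v.2.2 ^ 4 - v.1 * v.2.1 * v.2.2 ^ 3 + (v.1 ^ 2 + v.2.1 ^ 2 - 3) * v.2.2 ^ 2
        - v.1 * v.2.1 * v.2.2 + 1 = 0).card
      = ∑ z ∈ univ, (univ.filter fun xy : F × F =>
          z^4 - xy.1*xy.2*z^3 + (xy.1^2+xy.2^2-3)*z^2 - xy.1*xy.2*z + 1 = 0).card := by
    rw [Finset.card_eq_sum_card_fiberwise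
      (f := fun v : F × F × F => v.2.2) (t := univ) (fun v _ => mem_univ _)]
    apply Finset.sum_congr rfl
    intro z _
    apply Finset.card_nbij' (fun v => (v.1, v.2.1)) (fun xy => (xy.1, xy.2, z))
    · intro v hv
      simp only [Finset.mem_coe, mem_filter, mem_univ, true_and] at hv ⊢
      rw [← hv.2]
      have := hv.1
      linear_combination this
    · intro xy hxy
      simp only [Finset.mem_coe, mem_filter, mem_univ, true_and] at hxy ⊢
      constructor
      · linear_combination hxy
      · trivial
    · intro v hv
      simp only [Finset.mem_coe, mem_filter, mem_univ, true_and] at hv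
      exact Prod.ext rfl (Prod.ext rfl hv.2.symm)
    · intro xy _
      rfl
  -- Step 2: value of each slice
  have h1m1 : (1:F) ≠ -1 := fun h => h2F (by linear_combination h)
  have h0m1 : (0:F) ≠ -1 := fun h => one_ne_zero (α := F) (by linear_combination h)
  have h01 : (0:F) ≠ 1 := fun h => one_ne_zero (α := F) h.symm
  have hm11 : (-1:F) ≠ 1 := Ne.symm h1m1
  have hm10 : (-1:F) ≠ 0 := Ne.symm h0m1
  have hv0 : nval 0 = 0 := by simp [hnval]
  have hv1 : nval 1 = 2*q := by simp [hnval]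
  have hvm1 : nval (-1) = 2*q := by simp [hnval, hm11, hm10]
  have hvgen : ∀ z : F, z ≠ 0 → z ≠ 1 → z ≠ -1 →
      nval z = if (z^2-z-1)*(z^2+z-1) = 0 then 2*q-1 else q-1 := by
    intro z e0 e1 e2
    simp [hnval, e0, e1, e2]
  have hval : ∀ z : F, (univ.filter fun xy : F × F =>
      z^4 - xy.1*xy.2*z^3 + (xy.1^2+xy.2^2-3)*z^2 - xy.1*xy.2*z + 1 = 0).card = nval z := by
    intro z
    by_cases hz0 : z = 0
    · subst hz0
      rw [hv0]
      rw [Finset.card_eq_zero, Finset.filter_eq_empty_iff]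
      intro xy _
      intro h
      apply one_ne_zero (α := F)
      linear_combination h
    · by_cases hz1 : z = 1
      · subst hz1
        rw [hv1]
        exact slice_pm_one h2F 1 (Or.inl rfl)
      · by_cases hzm : z = -1
        · subst hzm
          rw [hvm1]
          exact slice_pm_one h2F (-1) (Or.inr rfl)
        · rw [hvgen z hz0 hz1 hzm]
          rw [slice_generic z hz0 hz1 hzm]
          by_cases hB : (z^2-z-1)*(z^2+z-1) = 0
          · rw [if_pos hB]
            have hc : -z⁻¹ * ((z^2-z-1)*(z^2+z-1)) = 0 := by rw [hB]; ring
            simp only [hc]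
            exact aux_card_mul_zero
          · rw [if_neg hB]
            refine aux_card_mul_ne _ ?_
            rw [neg_mul]
            exact neg_ne_zero.mpr (mul_ne_zero (inv_ne_zero hz0) hB)
  -- Step 3: evaluate the sum
  set A : Finset F := univ.filter (fun z : F => z^2 - z - 1 = 0) with hA
  set B : Finset F := univ.filter (fun z : F => z^2 + z - 1 = 0) with hB
  have hAcard : A.card = r := rootsA h2F
  have hBcard : B.card = r := rootsB h2F
  have hAmem : ∀ z ∈ A, z ≠ 0 ∧ z ≠ 1 ∧ z ≠ -1 ∧ (z^2-z-1)*(z^2+z-1) = 0 := by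
    intro z hz
    rw [hA, mem_filter] at hz
    have hz' := hz.2
    refine ⟨?_, ?_, ?_, by rw [hz']; ring⟩
    · rintro rfl; exact one_ne_zero (α := F) (by linear_combination -hz')
    · rintro rfl; exact one_ne_zero (α := F) (by linear_combination -hz')
    · rintro rfl; exact one_ne_zero (α := F) (by linear_combination hz')
  have hBmem : ∀ z ∈ B, z ≠ 0 ∧ z ≠ 1 ∧ z ≠ -1 ∧ (z^2-z-1)*(z^2+z-1) = 0 := by
    intro z hz
    rw [hB, mem_filter] at hz
    have hz' := hz.2
    refine ⟨?_, ?_, ?_, by rw [hz']; ring⟩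
    · rintro rfl; exact one_ne_zero (α := F) (by linear_combination -hz')
    · rintro rfl; exact one_ne_zero (α := F) (by linear_combination hz')
    · rintro rfl; exact one_ne_zero (α := F) (by linear_combination -hz')
  have hdisjAB : Disjoint A B := by
    rw [Finset.disjoint_left]
    intro z hzA hzB
    have h1 := (hAmem z hzA).1
    rw [hA, mem_filter] at hzA
    rw [hB, mem_filter] at hzB
    have : (2:F) * z = 0 := by linear_combination hzB.2 - hzA.2
    rcases mul_eq_zero.mp this with h' | h'
    · exact h2F h'
    · exact h1 h'
  set C : Finset F := {0, 1, -1} with hC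
  have hCcard : C.card = 3 := by
    rw [hC]
    rw [Finset.card_insert_of_notMem (by simp [h01, h0m1]),
      Finset.card_insert_of_notMem (by simp [h1m1]), Finset.card_singleton]
  have hdisjC : Disjoint C (A ∪ B) := by
    rw [Finset.disjoint_left]
    intro z hzC hzAB
    have hz : z ≠ 0 ∧ z ≠ 1 ∧ z ≠ -1 := by
      rcases Finset.mem_union.mp hzAB with h | h
      · exact ⟨(hAmem z h).1, (hAmem z h).2.1, (hAmem z h).2.2.1⟩
      · exact ⟨(hBmem z h).1, (hBmem z h).2.1, (hBmem z h).2.2.1⟩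
    rw [hC] at hzC
    simp only [Finset.mem_insert, Finset.mem_singleton] at hzC
    rcases hzC with rfl | rfl | rfl
    · exact hz.1 rfl
    · exact hz.2.1 rfl
    · exact hz.2.2 rfl
  set T : Finset F := C ∪ (A ∪ B) with hT
  have hTcard : T.card = 3 + (r + r) := by
    rw [hT, Finset.card_union_of_disjoint hdisjC, Finset.card_union_of_disjoint hdisjAB,
      hCcard, hAcard, hBcard]
  have hTle : T.card ≤ q := Finset.card_le_univ T
  have hout : ∀ z ∈ univ \ T, nval z = q - 1 := by
    intro z hz
    rw [Finset.mem_sdiff, hT] at hz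
    have hz' := hz.2
    simp only [Finset.mem_union, hC, Finset.mem_insert, Finset.mem_singleton,
      hA, hB, Finset.mem_filter, Finset.mem_univ, true_and, not_or] at hz'
    rw [hvgen z hz'.1.1 hz'.1.2.1 hz'.1.2.2, if_neg (mul_ne_zero hz'.2.1 hz'.2.2)]
  have hsum : ∑ z ∈ univ, nval z
      = (q - T.card) * (q - 1) + ((2*q + 2*q) + (r * (2*q-1) + r * (2*q-1))) := by
    rw [← Finset.sum_sdiff (Finset.subset_univ T)]
    congr 1
    · rw [Finset.sum_congr rfl hout, Finset.sum_const, Finset.card_sdiff_of_subset (Finset.subset_univ T),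
        Finset.card_univ, smul_eq_mul]
    · rw [hT, Finset.sum_union hdisjC, Finset.sum_union hdisjAB]
      congr 1
      · rw [hC]
        rw [Finset.sum_insert (by simp [h01, h0m1]), Finset.sum_insert (by simp [h1m1]),
          Finset.sum_singleton]
        rw [hv0, hv1, hvm1]
        omega
      · congr 1
        · have : ∀ z ∈ A, nval z = 2*q-1 := by
            intro z hz
            obtain ⟨e0, e1, e2, e3⟩ := hAmem z hz
            rw [hvgen z e0 e1 e2, if_pos e3]
          rw [Finset.sum_congr rfl this, Finset.sum_const, hAcard, smul_eq_mul]
        · have : ∀ z ∈ B, nval z = 2*q-1 := by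
            intro z hz
            obtain ⟨e0, e1, e2, e3⟩ := hBmem z hz
            rw [hvgen z e0 e1 e2, if_pos e3]
          rw [Finset.sum_congr rfl this, Finset.sum_const, hBcard, smul_eq_mul]
  -- Step 4: the number of square roots of 5
  have hrval : r = if Even n then 2 else 0 := by
    rw [hr]
    exact count_sqrt5 p n h2 h5 hn hleg F hF
  -- Conclusion
  rw [step0, step1, Finset.sum_congr rfl (fun z _ => hval z), hsum, hTcard]
  by_cases hE : Even n
  · rw [if_pos hE]
    have hr2 : r = 2 := by rw [hrval, if_pos hE]
    rw [hr2, ← hF]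
    have h7 : 3 + (2 + 2) ≤ q := by omega
    zify [h7, hq1, show 1 ≤ 2*q by omega]
    ring
  · rw [if_neg hE]
    have hr0 : r = 0 := by rw [hrval, if_neg hE]
    rw [hr0, ← hF]
    have h3 : 3 + (0 + 0) ≤ q := by omega
    zify [h3, hq1, show 1 ≤ 2*q by omega]
    ring
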